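/- Let ℓ : ℝ → ℝ be differentiable with L-Lipschitz derivative ℓ′ and suppose (ℓ′(z₁) − ℓ′(z₂))(z₁ − z₂) ≥ β(z₁ − z₂)² for all z₁, z₂ ∈ ℝ with 0 < β ≤ L. Define φ(z) := ℓ(z) − (β/2)z². Let x̂₁, …, x̂_n ∈ ℝ^d satisfy ‖x̂_i‖₂² ≤ B for all i. Then the function F(v) := (1/n) ∑_{i=1}^n φ(vᵀx̂_i) is differentiable and its gradient is (L − β)·B-Lipschitz: ‖∇F(v₁) − ∇F(v₂)‖₂ ≤ (L − β)B‖v₁ − v₂‖₂ for all v₁, v₂ ∈ ℝ^d. In particular, with B = μ(ρ)γ(C, ρ) bounding the preconditioned data norms, the preconditioned problem min_v F(v) + (β/2)‖v‖₂² has a (L − β)μ(ρ)γ(C, ρ)-smooth loss part and β-strongly convex regularizer, so its condition number is bounded by (L − β)μ(ρ)γ(C, ρ)/β. -/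

import Mathlib

open RealInnerProductSpace Finset

/-- if `ℓ` is differentiable with `L`-Lipschitz derivative `ℓ'`
satisfying the curvature condition `(ℓ'(z₁) - ℓ'(z₂))(z₁ - z₂) ≥ β(z₁ - z₂)²`
with `0 < β ≤ L`, `φ(z) = ℓ(z) - (β/2)z²`, and the (preconditioned) data satisfy
`‖x̂_i‖² ≤ B`, then `F(v) = (1/n) ∑ φ(vᵀx̂_i)` is differentiable with gradient
`∇F(v) = (1/n) ∑ (ℓ'(vᵀx̂_i) - β vᵀx̂_i) x̂_i`, which is `(L - β)B`-Lipschitz. -/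
theorem preconditioned_loss_smooth
    (d n : ℕ) (hn : 0 < n)
    (ℓ ℓ' : ℝ → ℝ) (L β B : ℝ)
    (hderiv : ∀ z, HasDerivAt ℓ (ℓ' z) z)
    (hL : ∀ z₁ z₂ : ℝ, |ℓ' z₁ - ℓ' z₂| ≤ L * |z₁ - z₂|)
    (hβ : 0 < β) (hβL : β ≤ L)
    (hcurv : ∀ z₁ z₂ : ℝ, (ℓ' z₁ - ℓ' z₂) * (z₁ - z₂) ≥ β * (z₁ - z₂) ^ 2)
    (φ : ℝ → ℝ) (hφ : ∀ z, φ z = ℓ z - β / 2 * z ^ 2)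
    (xhat : Fin n → EuclideanSpace ℝ (Fin d))
    (hx : ∀ i, ‖xhat i‖ ^ 2 ≤ B)
    (F : EuclideanSpace ℝ (Fin d) → ℝ)
    (hF : ∀ v, F v = (n : ℝ)⁻¹ * ∑ i, φ ⟪v, xhat i⟫)
    (G : EuclideanSpace ℝ (Fin d) → EuclideanSpace ℝ (Fin d))
    (hG : ∀ v, G v = (n : ℝ)⁻¹ • ∑ i, (ℓ' ⟪v, xhat i⟫ - β * ⟪v, xhat i⟫) • xhat i) :
    (∀ v, HasGradientAt F (G v) v) ∧
      ∀ v₁ v₂ : EuclideanSpace ℝ (Fin d),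
        ‖G v₁ - G v₂‖ ≤ (L - β) * B * ‖v₁ - v₂‖ := by
  have hpsi : ∀ z₁ z₂ : ℝ, |(ℓ' z₁ - β * z₁) - (ℓ' z₂ - β * z₂)| ≤ (L - β) * |z₁ - z₂| := by
    intro z₁ z₂
    have h1 := abs_le.mp (hL z₁ z₂)
    have h2 := hcurv z₁ z₂
    have hq : 0 ≤ (L - β) * (z₁ - z₂) ^ 2 :=
      mul_nonneg (by linarith) (sq_nonneg _)
    rw [abs_le]
    rcases lt_trichotomy (z₁ - z₂) 0 with h | h | h
    · rw [abs_of_neg h] at *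
      constructor <;> nlinarith
    · have hz : z₁ = z₂ := by linarith
      subst hz
      simp
    · rw [abs_of_pos h] at *
      constructor <;> nlinarith
  constructor
  · intro v
    rw [hasGradientAt_iff_hasFDerivAt]
    have hterm : ∀ x : EuclideanSpace ℝ (Fin d), HasFDerivAt (fun w => φ ⟪w, x⟫)
        ((ℓ' ⟪v, x⟫ - β * ⟪v, x⟫) • (innerSL ℝ x)) v := by
      intro x
      have h1 : HasFDerivAt (fun w : EuclideanSpace ℝ (Fin d) => ⟪w, x⟫) (innerSL ℝ x) v := by
        have h0 : (fun w : EuclideanSpace ℝ (Fin d) => ⟪w, x⟫)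
            = fun w => innerSL ℝ x w := by
          funext w; simp [real_inner_comm, mul_comm]
        rw [h0]; exact (innerSL ℝ x).hasFDerivAt
      have h2 : HasDerivAt φ (ℓ' ⟪v, x⟫ - β * ⟪v, x⟫) ⟪v, x⟫ := by
        have := (hderiv ⟪v, x⟫).sub (((hasDerivAt_pow 2 ⟪v, x⟫)).const_mul (β / 2))
        have heq : (ℓ - fun z => β / 2 * z ^ 2) = φ := by
          funext z; rw [hφ]; rfl
        rw [heq] at this
        refine this.congr_deriv ?_; push_cast; ring
      exact h2.comp_hasFDerivAt v h1
    have hsum : HasFDerivAt F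
        ((n : ℝ)⁻¹ • ∑ i, (ℓ' ⟪v, xhat i⟫ - β * ⟪v, xhat i⟫) • (innerSL ℝ (xhat i))) v := by
      have hFeq : (fun v : EuclideanSpace ℝ (Fin d) => (n : ℝ)⁻¹ * ∑ i, φ ⟪v, xhat i⟫) = F := by
        funext w; rw [hF]
      rw [← hFeq]
      have := (HasFDerivAt.fun_sum (fun i (_ : i ∈ Finset.univ) => hterm (xhat i))).const_mul
        ((n : ℝ)⁻¹)
      simpa [smul_sum] using this
    refine hsum.congr_fderiv ?_
    apply ContinuousLinearMap.ext
    intro w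
    simp [hG, InnerProductSpace.toDual_apply_apply, sum_inner, real_inner_smul_left,
      ContinuousLinearMap.sum_apply, real_inner_comm]
  · intro v₁ v₂
    have hB : 0 ≤ B := le_trans (sq_nonneg _) (hx ⟨0, hn⟩)
    have hLβ : 0 ≤ L - β := by linarith
    have hdiff : G v₁ - G v₂ = (n : ℝ)⁻¹ •
        ∑ i, (((ℓ' ⟪v₁, xhat i⟫ - β * ⟪v₁, xhat i⟫) - (ℓ' ⟪v₂, xhat i⟫ - β * ⟪v₂, xhat i⟫))
          • xhat i) := by
      rw [hG, hG, ← smul_sub, ← Finset.sum_sub_distrib]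
      congr 1
      apply Finset.sum_congr rfl
      intro i _
      module
    rw [hdiff, norm_smul]
    have hbound : ‖∑ i, (((ℓ' ⟪v₁, xhat i⟫ - β * ⟪v₁, xhat i⟫) -
        (ℓ' ⟪v₂, xhat i⟫ - β * ⟪v₂, xhat i⟫)) • xhat i)‖
        ≤ ∑ _i : Fin n, (L - β) * B * ‖v₁ - v₂‖ := by
      refine le_trans (norm_sum_le _ _) (Finset.sum_le_sum ?_)
      intro i _
      rw [norm_smul]
      have h1 : ‖(ℓ' ⟪v₁, xhat i⟫ - β * ⟪v₁, xhat i⟫) -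
          (ℓ' ⟪v₂, xhat i⟫ - β * ⟪v₂, xhat i⟫)‖ ≤ (L - β) * |⟪v₁ - v₂, xhat i⟫| := by
        have := hpsi ⟪v₁, xhat i⟫ ⟪v₂, xhat i⟫
        rwa [← inner_sub_left] at this
      have h2 : |⟪v₁ - v₂, xhat i⟫| ≤ ‖v₁ - v₂‖ * ‖xhat i‖ := abs_real_inner_le_norm _ _
      have h3 : ‖xhat i‖ ^ 2 ≤ B := hx i
      have h4 : (0:ℝ) ≤ ‖xhat i‖ := norm_nonneg _
      have h5 : (0:ℝ) ≤ |⟪v₁ - v₂, xhat i⟫| := abs_nonneg _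
      have h6 : (0:ℝ) ≤ ‖v₁ - v₂‖ := norm_nonneg _
      calc ‖(ℓ' ⟪v₁, xhat i⟫ - β * ⟪v₁, xhat i⟫) -
          (ℓ' ⟪v₂, xhat i⟫ - β * ⟪v₂, xhat i⟫)‖ * ‖xhat i‖
          ≤ ((L - β) * |⟪v₁ - v₂, xhat i⟫|) * ‖xhat i‖ :=
            mul_le_mul_of_nonneg_right h1 h4
        _ ≤ (L - β) * B * ‖v₁ - v₂‖ := by
            nlinarith [mul_le_mul_of_nonneg_right h2 h4,
              mul_le_mul_of_nonneg_left h3 h6]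
    rw [Finset.sum_const, Finset.card_univ, Fintype.card_fin] at hbound
    have hn' : (0:ℝ) < n := by exact_mod_cast hn
    calc ‖(n : ℝ)⁻¹‖ * ‖∑ i, (((ℓ' ⟪v₁, xhat i⟫ - β * ⟪v₁, xhat i⟫) -
        (ℓ' ⟪v₂, xhat i⟫ - β * ⟪v₂, xhat i⟫)) • xhat i)‖
        ≤ (n : ℝ)⁻¹ * (n • ((L - β) * B * ‖v₁ - v₂‖)) := by
          rw [Real.norm_eq_abs, abs_of_nonneg (by positivity)]
          exact mul_le_mul_of_nonneg_left hbound (by positivity)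
      _ = (L - β) * B * ‖v₁ - v₂‖ := by
          rw [nsmul_eq_mul]; field_simp
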